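/- For every n ≥ 1 and 0 ≤ a ≤ n, the map d_{a,n} : V_a^n → (V_{n−a}^n)^* is bijective, hence an isomorphism of 𝔸-vector spaces (and of U_q(sl_n)-modules). -/

import Mathlib

noncomputable section

open scoped TensorProduct

set_option maxHeartbeats 1000000
set_option synthInstance.maxHeartbeats 400000

/-- The ground field `𝔸 = ℚ(q)`. -/
abbrev A : Type := RatFunc ℚ

/-- The element `q ∈ 𝔸`. -/
def qq : A := RatFunc.X

/-- The set of `a`-element subsets of `{0, 1, …, n-1}` (a model for the
`a`-element subsets of `{1, …, n}`), the basis of `V_a^n`. -/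
abbrev BS (n a : ℕ) : Type := {s : Finset ℕ // s ⊆ Finset.range n ∧ s.card = a}

instance BS.fintype (n a : ℕ) : Fintype (BS n a) :=
  Fintype.subtype ((Finset.range n).powerset.filter fun s => s.card = a) (by
    intro s
    simp [Finset.mem_powerset, Finset.mem_filter])

/-- The fundamental representation `V_a^n`, as the `𝔸`-vector space with basis the
`a`-element subsets of an `n`-element set. -/
abbrev V (n a : ℕ) : Type := BS n a → A

/-- `i₋₁ : V_{a-1}^{n-1} → V_a^n` (here with indices shifted:
`iminus n a : V_a^n → V_{a+1}^{n+1}`), the inclusion of the summand of subsets containing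
the new top element `n`. -/
def iminus (n a : ℕ) : V n a →ₗ[A] V (n+1) (a+1) where
  toFun f s := if h : n ∈ s.1 then
      f ⟨s.1.erase n, by
        constructor
        · intro x hx
          have hx' := Finset.mem_erase.mp hx
          have hx2 := s.2.1 hx'.2
          simp only [Finset.mem_range] at hx2 ⊢
          omega
        · rw [Finset.card_erase_of_mem h, s.2.2]; omega⟩
    else 0
  map_add' f g := by
    funext s
    simp only [Pi.add_apply]
    by_cases h : n ∈ s.1 <;> simp [h]
  map_smul' c f := by
    funext s
    simp only [Pi.smul_apply, smul_eq_mul, RingHom.id_apply]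
    by_cases h : n ∈ s.1 <;> simp [h]

/-- `i₀ : V_a^{n-1} → V_a^n` (as `izero n a : V_a^n → V_a^{n+1}`), the inclusion of the
summand of subsets not containing the new top element. -/
def izero (n a : ℕ) : V n a →ₗ[A] V (n+1) a where
  toFun f s := if h : n ∈ s.1 then 0 else
      f ⟨s.1, by
        refine ⟨fun x hx => ?_, s.2.2⟩
        have hx2 := s.2.1 hx
        simp only [Finset.mem_range] at hx2 ⊢
        rcases Nat.lt_succ_iff_lt_or_eq.mp hx2 with h' | h'
        · exact h'
        · exact absurd (h' ▸ hx) h⟩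
  map_add' f g := by
    funext s
    simp only [Pi.add_apply]
    by_cases h : n ∈ s.1 <;> simp [h]
  map_smul' c f := by
    funext s
    simp only [Pi.smul_apply, smul_eq_mul, RingHom.id_apply]
    by_cases h : n ∈ s.1 <;> simp [h]

/-- `p₋₁ : V_a^n → V_{a-1}^{n-1}` (as `pminus n a : V_{a+1}^{n+1} → V_a^n`), the projection
onto the summand of subsets containing the top element. -/
def pminus (n a : ℕ) : V (n+1) (a+1) →ₗ[A] V n a where
  toFun f t := f ⟨insert n t.1, by
    have hn : n ∉ t.1 := fun h => by
      have := t.2.1 h; simp [Finset.mem_range] at this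
    constructor
    · intro x hx
      rcases Finset.mem_insert.mp hx with rfl | hx
      · simp
      · have := t.2.1 hx; simp only [Finset.mem_range] at this ⊢; omega
    · rw [Finset.card_insert_of_notMem hn, t.2.2]⟩
  map_add' f g := rfl
  map_smul' c f := rfl

/-- `p₀ : V_a^n → V_a^{n-1}` (as `pzero n a : V_a^{n+1} → V_a^n`), the projection onto the
summand of subsets not containing the top element. -/
def pzero (n a : ℕ) : V (n+1) a →ₗ[A] V n a where
  toFun f t := f ⟨t.1, by
    refine ⟨fun x hx => ?_, t.2.2⟩
    have := t.2.1 hx; simp only [Finset.mem_range] at this ⊢; omega⟩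
  map_add' f g := rfl
  map_smul' c f := rfl

/-- The diagonal operator on `V_a^n` acting by the scalar `x` on basis subsets containing `m`
and by `y` on those not containing `m`; for `m = n-1` this is `x • i₋₁ p₋₁ + y • i₀ p₀`. -/
def diagOp (n a m : ℕ) (x y : A) : Module.End A (V n a) where
  toFun f s := (if m ∈ s.1 then x else y) * f s
  map_add' f g := by
    funext s
    simp only [Pi.add_apply]
    ring
  map_smul' c f := by
    funext s
    simp only [Pi.smul_apply, smul_eq_mul, RingHom.id_apply]
    ring

/-- The recursively defined action of the generator `X_i^+` on `V_a^n`
(`XpOp n a i`, where `i` is the literal subscript, `1 ≤ i ≤ n-1`). -/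
def XpOp : (n a i : ℕ) → Module.End A (V n a)
  | 0, _, _ => 0
  | 1, _, _ => 0
  | _+2, 0, _ => 0
  | n+2, a+1, i =>
    if a + 1 = n + 2 then 0
    else if i = n + 1 then
      (iminus (n+1) a) ∘ₗ (izero n a) ∘ₗ (pminus n a) ∘ₗ (pzero (n+1) (a+1))
    else
      (iminus (n+1) a) ∘ₗ (XpOp (n+1) a i) ∘ₗ (pminus (n+1) a)
      + (izero (n+1) (a+1)) ∘ₗ (XpOp (n+1) (a+1) i) ∘ₗ (pzero (n+1) (a+1))

/-- The recursively defined action of the generator `X_i^-` on `V_a^n`. -/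
def XmOp : (n a i : ℕ) → Module.End A (V n a)
  | 0, _, _ => 0
  | 1, _, _ => 0
  | _+2, 0, _ => 0
  | n+2, a+1, i =>
    if a + 1 = n + 2 then 0
    else if i = n + 1 then
      (izero (n+1) (a+1)) ∘ₗ (iminus n a) ∘ₗ (pzero n a) ∘ₗ (pminus (n+1) a)
    else
      (iminus (n+1) a) ∘ₗ (XmOp (n+1) a i) ∘ₗ (pminus (n+1) a)
      + (izero (n+1) (a+1)) ∘ₗ (XmOp (n+1) (a+1) i) ∘ₗ (pzero (n+1) (a+1))

/-- The recursively defined action of the generator `K_i` on `V_a^n`.  The middle factors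
`diagOp … 1 q` and `diagOp … q⁻¹ 1` are the operators `i₋₁ p₋₁ + q i₀ p₀` and
`q⁻¹ i₋₁ p₋₁ + i₀ p₀` of the recursion. -/
def KOp : (n a i : ℕ) → Module.End A (V n a)
  | 0, _, _ => 1
  | 1, _, _ => 1
  | _+2, 0, _ => 1
  | n+2, a+1, i =>
    if a + 1 = n + 2 then 1
    else if i = n + 1 then
      (iminus (n+1) a) ∘ₗ (diagOp (n+1) a n 1 qq) ∘ₗ (pminus (n+1) a)
      + (izero (n+1) (a+1)) ∘ₗ (diagOp (n+1) (a+1) n qq⁻¹ 1) ∘ₗ (pzero (n+1) (a+1))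
    else
      (iminus (n+1) a) ∘ₗ (KOp (n+1) a i) ∘ₗ (pminus (n+1) a)
      + (izero (n+1) (a+1)) ∘ₗ (KOp (n+1) (a+1) i) ∘ₗ (pzero (n+1) (a+1))

/-- The recursively defined action of `K_i⁻¹` on `V_a^n` (the inverse of `KOp`),
given by the same recursion with `q` and `q⁻¹` interchanged. -/
def KinvOp : (n a i : ℕ) → Module.End A (V n a)
  | 0, _, _ => 1
  | 1, _, _ => 1
  | _+2, 0, _ => 1
  | n+2, a+1, i =>
    if a + 1 = n + 2 then 1
    else if i = n + 1 then
      (iminus (n+1) a) ∘ₗ (diagOp (n+1) a n 1 qq⁻¹) ∘ₗ (pminus (n+1) a)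
      + (izero (n+1) (a+1)) ∘ₗ (diagOp (n+1) (a+1) n qq 1) ∘ₗ (pzero (n+1) (a+1))
    else
      (iminus (n+1) a) ∘ₗ (KinvOp (n+1) a i) ∘ₗ (pminus (n+1) a)
      + (izero (n+1) (a+1)) ∘ₗ (KinvOp (n+1) (a+1) i) ∘ₗ (pzero (n+1) (a+1))
/-! ### The quantum group `U_q(sl_n)` by generators and relations.

We present the algebra with `m = n - 1` generators of each kind `K i, K i⁻¹, X i⁺, X i⁻`,
indexed by `i : Fin m` (so `i` corresponds to the subscript `i + 1 ∈ {1, …, n-1}`). -/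

/-- Generators of `U_q(sl_n)` (with `m = n-1`). -/
inductive UqGen (m : ℕ) : Type
  | K : Fin m → UqGen m
  | Kinv : Fin m → UqGen m
  | Xp : Fin m → UqGen m
  | Xm : Fin m → UqGen m

/-- The free `𝔸`-algebra on the generators. -/
abbrev FA (m : ℕ) : Type := FreeAlgebra A (UqGen m)

namespace FA
variable {m : ℕ}
def K (i : Fin m) : FA m := FreeAlgebra.ι A (UqGen.K i)
def Kinv (i : Fin m) : FA m := FreeAlgebra.ι A (UqGen.Kinv i)
def Xp (i : Fin m) : FA m := FreeAlgebra.ι A (UqGen.Xp i)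
def Xm (i : Fin m) : FA m := FreeAlgebra.ι A (UqGen.Xm i)
end FA

/-- The Cartan integers `(i,j)` of type `A_m`: `2` if `i = j`, `-1` if `|i-j| = 1`,
`0` if `|i-j| ≥ 2`. -/
def cart {m : ℕ} (i j : Fin m) : ℤ :=
  if i = j then 2 else if (i : ℕ) + 1 = j ∨ (j : ℕ) + 1 = i then -1 else 0

/-- The defining relations of `U_q(sl_n)`. -/
inductive uqRel (m : ℕ) : FA m → FA m → Prop
  | KKinv (i : Fin m) : uqRel m (FA.K i * FA.Kinv i) 1
  | KinvK (i : Fin m) : uqRel m (FA.Kinv i * FA.K i) 1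
  | KK (i j : Fin m) : uqRel m (FA.K i * FA.K j) (FA.K j * FA.K i)
  | KXp (i j : Fin m) : uqRel m (FA.K i * FA.Xp j) (qq ^ (cart i j) • (FA.Xp j * FA.K i))
  | KXm (i j : Fin m) : uqRel m (FA.K i * FA.Xm j) (qq ^ (-cart i j) • (FA.Xm j * FA.K i))
  | XpXm (i j : Fin m) :
      uqRel m (FA.Xp i * FA.Xm j - FA.Xm j * FA.Xp i)
        (if i = j then (qq - qq⁻¹)⁻¹ • (FA.K i - FA.Kinv i) else 0)
  | XpXp (i j : Fin m) (h : (i : ℕ) + 2 ≤ j ∨ (j : ℕ) + 2 ≤ i) :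
      uqRel m (FA.Xp i * FA.Xp j) (FA.Xp j * FA.Xp i)
  | XmXm (i j : Fin m) (h : (i : ℕ) + 2 ≤ j ∨ (j : ℕ) + 2 ≤ i) :
      uqRel m (FA.Xm i * FA.Xm j) (FA.Xm j * FA.Xm i)
  | serreP (i j : Fin m) (h : (i : ℕ) + 1 = j ∨ (j : ℕ) + 1 = i) :
      uqRel m (FA.Xp i ^ 2 * FA.Xp j - (qq + qq⁻¹) • (FA.Xp i * FA.Xp j * FA.Xp i)
        + FA.Xp j * FA.Xp i ^ 2) 0
  | serreM (i j : Fin m) (h : (i : ℕ) + 1 = j ∨ (j : ℕ) + 1 = i) :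
      uqRel m (FA.Xm i ^ 2 * FA.Xm j - (qq + qq⁻¹) • (FA.Xm i * FA.Xm j * FA.Xm i)
        + FA.Xm j * FA.Xm i ^ 2) 0

/-- The quantum group `U_q(sl_{m+1})`, presented by generators and relations.
For `U_q(sl_n)` take `m = n - 1`. -/
abbrev Uq (m : ℕ) : Type := RingQuot (uqRel m)

namespace Uq
variable {m : ℕ}
/-- The generator `K_{i+1}` of `U_q(sl_n)`. -/
def K (i : Fin m) : Uq m := RingQuot.mkAlgHom A (uqRel m) (FA.K i)
/-- The generator `K_{i+1}⁻¹` of `U_q(sl_n)`. -/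
def Kinv (i : Fin m) : Uq m := RingQuot.mkAlgHom A (uqRel m) (FA.Kinv i)
/-- The generator `X_{i+1}^+` of `U_q(sl_n)`. -/
def Xp (i : Fin m) : Uq m := RingQuot.mkAlgHom A (uqRel m) (FA.Xp i)
/-- The generator `X_{i+1}^-` of `U_q(sl_n)`. -/
def Xm (i : Fin m) : Uq m := RingQuot.mkAlgHom A (uqRel m) (FA.Xm i)
end Uq
/-! ### The duality maps `d_{a,n}`, triple invariants, and the pivotal elements `τ`. -/

/-- The sum-of-coefficients functional on `V_a^n`. -/
def sumF (n a : ℕ) : V n a →ₗ[A] A where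
  toFun f := ∑ s : BS n a, f s
  map_add' f g := by simp [Finset.sum_add_distrib]
  map_smul' c f := by simp [Finset.mul_sum]

/-- The "trivial" map `V_a^n → (V_c^n)^*`; when `V_a^n` and `V_c^n` are one-dimensional
(`a = 0` or `a = n`, and correspondingly for `c`) it sends the basis vector to the dual
basis vector.  Used for the base cases of `d_{a,n}`. -/
def dtriv (n a c : ℕ) : V n a →ₗ[A] Module.Dual A (V n c) :=
  LinearMap.smulRight (sumF n a) (sumF n c)

/-- The map `d_{a,n} : V_a^n → (V_{n-a}^n)^*`, defined recursively by
`d_{a,n} = i₀ ∘ d_{a-1,n-1} ∘ p₋₁ + (-q)^{-a} i₋₁ ∘ d_{a,n-1} ∘ p₀`, with both base cases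
sending the basis vector to the dual basis vector.  Here `dmap n a c` has target
`(V_c^n)^*`, to be used with `c = n - a`. -/
def dmap : (n a c : ℕ) → (V n a →ₗ[A] Module.Dual A (V n c))
  | 0, a, c => dtriv 0 a c
  | n+1, 0, c => dtriv (n+1) 0 c
  | n+1, a+1, c =>
    if a + 1 = n + 1 then dtriv (n+1) (a+1) c
    else
      match c with
      | 0 => 0
      | c+1 =>
        (pzero n (c+1)).dualMap ∘ₗ (dmap n a (c+1)) ∘ₗ (pminus n a)
        + ((-qq) ^ (a+1))⁻¹ •
            ((pminus n c).dualMap ∘ₗ (dmap n (a+1) c) ∘ₗ (pzero n (a+1)))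

section voutvin

open TensorProduct

/-- First term of the recursion for `v_out`: `(-1)^c q^{b+c} (i₋₁ ⊗ i₀ ⊗ i₀)`. -/
def vterm1 (n a b c : ℕ) (v : V n a ⊗[A] (V n b ⊗[A] V n c)) :
    V (n+1) (a+1) ⊗[A] (V (n+1) b ⊗[A] V (n+1) c) :=
  ((-1 : A)^c * qq^(b+c)) •
    (TensorProduct.map (iminus n a) (TensorProduct.map (izero n b) (izero n c)) v)

/-- Second term of the recursion for `v_out`: `(-1)^a q^c (i₀ ⊗ i₋₁ ⊗ i₀)`. -/
def vterm2 (n a b c : ℕ) (v : V n a ⊗[A] (V n b ⊗[A] V n c)) :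
    V (n+1) a ⊗[A] (V (n+1) (b+1) ⊗[A] V (n+1) c) :=
  ((-1 : A)^a * qq^c) •
    (TensorProduct.map (izero n a) (TensorProduct.map (iminus n b) (izero n c)) v)

/-- Third term of the recursion for `v_out`: `(-1)^b (i₀ ⊗ i₀ ⊗ i₋₁)`. -/
def vterm3 (n a b c : ℕ) (v : V n a ⊗[A] (V n b ⊗[A] V n c)) :
    V (n+1) a ⊗[A] (V (n+1) b ⊗[A] V (n+1) (c+1)) :=
  ((-1 : A)^b) •
    (TensorProduct.map (izero n a) (TensorProduct.map (izero n b) (iminus n c)) v)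

/-- The triple invariant `v_out^n_{a,b,c} ∈ V_a^n ⊗ V_b^n ⊗ V_c^n` (intended for
`a + b + c = n`), defined by the recursion of Definition `defn:trivalent-vertices`,
omitting any term with a negative subscript. -/
def voutE : (n a b c : ℕ) → V n a ⊗[A] (V n b ⊗[A] V n c)
  | 0, _, _, _ => (fun _ => (1:A)) ⊗ₜ[A] ((fun _ => (1:A)) ⊗ₜ[A] (fun _ => (1:A)))
  | n+1, 0, 0, 0 => 0
  | n+1, a+1, 0, 0 => vterm1 n a 0 0 (voutE n a 0 0)
  | n+1, 0, b+1, 0 => vterm2 n 0 b 0 (voutE n 0 b 0)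
  | n+1, 0, 0, c+1 => vterm3 n 0 0 c (voutE n 0 0 c)
  | n+1, a+1, b+1, 0 =>
      vterm1 n a (b+1) 0 (voutE n a (b+1) 0) + vterm2 n (a+1) b 0 (voutE n (a+1) b 0)
  | n+1, a+1, 0, c+1 =>
      vterm1 n a 0 (c+1) (voutE n a 0 (c+1)) + vterm3 n (a+1) 0 c (voutE n (a+1) 0 c)
  | n+1, 0, b+1, c+1 =>
      vterm2 n 0 b (c+1) (voutE n 0 b (c+1)) + vterm3 n 0 (b+1) c (voutE n 0 (b+1) c)
  | n+1, a+1, b+1, c+1 =>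
      vterm1 n a (b+1) (c+1) (voutE n a (b+1) (c+1))
      + vterm2 n (a+1) b (c+1) (voutE n (a+1) b (c+1))
      + vterm3 n (a+1) (b+1) c (voutE n (a+1) (b+1) c)

/-- First term of the recursion for `v_in`: `(-1)^c (…) ∘ (p₋₁ ⊗ p₀ ⊗ p₀)`. -/
def wterm1 (n a b c : ℕ) (φ : V n a ⊗[A] (V n b ⊗[A] V n c) →ₗ[A] A) :
    V (n+1) (a+1) ⊗[A] (V (n+1) b ⊗[A] V (n+1) c) →ₗ[A] A :=
  ((-1 : A)^c) •
    (φ ∘ₗ TensorProduct.map (pminus n a) (TensorProduct.map (pzero n b) (pzero n c)))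

/-- Second term of the recursion for `v_in`: `(-1)^a q^{-a} (…) ∘ (p₀ ⊗ p₋₁ ⊗ p₀)`. -/
def wterm2 (n a b c : ℕ) (φ : V n a ⊗[A] (V n b ⊗[A] V n c) →ₗ[A] A) :
    V (n+1) a ⊗[A] (V (n+1) (b+1) ⊗[A] V (n+1) c) →ₗ[A] A :=
  ((-1 : A)^a * (qq^a)⁻¹) •
    (φ ∘ₗ TensorProduct.map (pzero n a) (TensorProduct.map (pminus n b) (pzero n c)))

/-- Third term of the recursion for `v_in`: `(-1)^b q^{-a-b} (…) ∘ (p₀ ⊗ p₀ ⊗ p₋₁)`. -/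
def wterm3 (n a b c : ℕ) (φ : V n a ⊗[A] (V n b ⊗[A] V n c) →ₗ[A] A) :
    V (n+1) a ⊗[A] (V (n+1) b ⊗[A] V (n+1) (c+1)) →ₗ[A] A :=
  ((-1 : A)^b * (qq^(a+b))⁻¹) •
    (φ ∘ₗ TensorProduct.map (pzero n a) (TensorProduct.map (pzero n b) (pminus n c)))

/-- The triple coinvariant `v_in^n_{a,b,c} : V_a^n ⊗ V_b^n ⊗ V_c^n → 𝔸` (intended for
`a + b + c = n`), defined recursively, omitting any term with a negative subscript. -/
def vinE : (n a b c : ℕ) → (V n a ⊗[A] (V n b ⊗[A] V n c) →ₗ[A] A)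
  | 0, a, b, c =>
      (LinearMap.mul' A A) ∘ₗ
        TensorProduct.map (sumF 0 a)
          ((LinearMap.mul' A A) ∘ₗ TensorProduct.map (sumF 0 b) (sumF 0 c))
  | n+1, 0, 0, 0 => 0
  | n+1, a+1, 0, 0 => wterm1 n a 0 0 (vinE n a 0 0)
  | n+1, 0, b+1, 0 => wterm2 n 0 b 0 (vinE n 0 b 0)
  | n+1, 0, 0, c+1 => wterm3 n 0 0 c (vinE n 0 0 c)
  | n+1, a+1, b+1, 0 =>
      wterm1 n a (b+1) 0 (vinE n a (b+1) 0) + wterm2 n (a+1) b 0 (vinE n (a+1) b 0)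
  | n+1, a+1, 0, c+1 =>
      wterm1 n a 0 (c+1) (vinE n a 0 (c+1)) + wterm3 n (a+1) 0 c (vinE n (a+1) 0 c)
  | n+1, 0, b+1, c+1 =>
      wterm2 n 0 b (c+1) (vinE n 0 b (c+1)) + wterm3 n 0 (b+1) c (vinE n 0 (b+1) c)
  | n+1, a+1, b+1, c+1 =>
      wterm1 n a (b+1) (c+1) (vinE n a (b+1) (c+1))
      + wterm2 n (a+1) b (c+1) (vinE n (a+1) b (c+1))
      + wterm3 n (a+1) (b+1) c (vinE n (a+1) (b+1) c)

end voutvin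

/-- The operator `∏_{j=1}^{n-1} K_j^j` on `V_a^n`. -/
def kjOp (n a : ℕ) : Module.End A (V n a) :=
  (List.ofFn fun i : Fin (n-1) => (KOp n a ((i : ℕ)+1)) ^ ((i : ℕ)+1)).prod

/-- The pivotal operator `τ_n = ∏_{j=1}^{n-1} K_j^{j(n-j)}` on `V_a^n`. -/
def tauOp (n a : ℕ) : Module.End A (V n a) :=
  (List.ofFn fun i : Fin (n-1) => (KOp n a ((i : ℕ)+1)) ^ (((i : ℕ)+1) * (n - ((i : ℕ)+1)))).prod

/-- The inverse pivotal operator `τ_n⁻¹ = ∏_{j=1}^{n-1} K_j^{-j(n-j)}` on `V_a^n`. -/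
def tauinvOp (n a : ℕ) : Module.End A (V n a) :=
  (List.ofFn fun i : Fin (n-1) => (KinvOp n a ((i : ℕ)+1)) ^ (((i : ℕ)+1) * (n - ((i : ℕ)+1)))).prod

/-- The element `τ_n = ∏_{j=1}^{n-1} K_j^{j(n-j)} ∈ U_q(sl_n)`. -/
def tauU (n : ℕ) : Uq (n-1) :=
  (List.ofFn fun i : Fin (n-1) => (Uq.K i) ^ (((i : ℕ)+1) * (n - ((i : ℕ)+1)))).prod

/-- The Cartan integers for literal subscripts `i, j ∈ {1, …, n-1}`. -/
def cartN (i j : ℕ) : ℤ :=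
  if i = j then 2 else if i + 1 = j ∨ j + 1 = i then -1 else 0


namespace S8

/-- Remove the top element `n` from a subset. -/
def eraseBS (n a : ℕ) (s : BS (n+1) (a+1)) (h : n ∈ s.1) : BS n a :=
  ⟨s.1.erase n, by
    constructor
    · intro x hx
      have hx' := Finset.mem_erase.mp hx
      have hx2 := s.2.1 hx'.2
      simp only [Finset.mem_range] at hx2 ⊢
      omega
    · rw [Finset.card_erase_of_mem h, s.2.2]
      omega⟩

/-- View a subset not containing `n` as a subset of `range n`. -/
def castBS (n a : ℕ) (s : BS (n+1) a) (h : n ∉ s.1) : BS n a :=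
  ⟨s.1, by
    refine ⟨fun x hx => ?_, s.2.2⟩
    have hx2 := s.2.1 hx
    simp only [Finset.mem_range] at hx2 ⊢
    rcases Nat.lt_succ_iff_lt_or_eq.mp hx2 with h' | h'
    · exact h'
    · exact absurd (h' ▸ hx) h⟩

/-- The coefficient of the pairing `dmap` in the "complementary" matrix entry. -/
def cf : (n a : ℕ) → BS n a → A
  | 0, _, _ => 1
  | _+1, 0, _ => 1
  | n+1, a+1, s =>
    if a + 1 = n + 1 then 1
    else if h : n ∈ s.1 then cf n a (eraseBS n a s h)
    else ((-qq) ^ (a+1))⁻¹ * cf n (a+1) (castBS n (a+1) s h)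

lemma cf_ne_zero : ∀ (n a : ℕ) (s : BS n a), cf n a s ≠ 0 := by
  intro n
  induction n with
  | zero => intro a s; simp [cf]
  | succ n ih =>
    intro a s
    match a with
    | 0 => simp [cf]
    | a+1 =>
      rw [cf]
      split
      · exact one_ne_zero
      · split
        · exact ih _ _
        · exact mul_ne_zero
            (inv_ne_zero (pow_ne_zero _ (neg_ne_zero.mpr RatFunc.X_ne_zero)))
            (ih _ _)

lemma not_mem_of_BS {n a : ℕ} (t : BS n a) : n ∉ t.1 := by
  intro h
  have := t.2.1 h
  simp at this

lemma pminus_single_mem (n a : ℕ) (s : BS (n+1) (a+1)) (h : n ∈ s.1) :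
    pminus n a (Pi.single s (1:A)) = Pi.single (eraseBS n a s h) 1 := by
  funext t
  have hn : n ∉ t.1 := not_mem_of_BS t
  simp only [pminus, LinearMap.coe_mk, AddHom.coe_mk, Pi.single_apply]
  refine if_congr ?_ rfl rfl
  constructor
  · intro hh
    apply Subtype.ext
    have h1 : insert n t.1 = s.1 := congrArg Subtype.val hh
    show t.1 = s.1.erase n
    rw [← h1, Finset.erase_insert hn]
  · intro hh
    apply Subtype.ext
    show insert n t.1 = s.1
    have h1 : t.1 = s.1.erase n := congrArg Subtype.val hh
    rw [h1, Finset.insert_erase h]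

lemma pminus_single_not_mem (n a : ℕ) (s : BS (n+1) (a+1)) (h : n ∉ s.1) :
    pminus n a (Pi.single s (1:A)) = 0 := by
  funext t
  simp only [pminus, LinearMap.coe_mk, AddHom.coe_mk, Pi.single_apply, Pi.zero_apply]
  rw [if_neg]
  intro hh
  exact h (congrArg Subtype.val hh ▸ Finset.mem_insert_self n t.1)

lemma pzero_single_not_mem (n a : ℕ) (s : BS (n+1) a) (h : n ∉ s.1) :
    pzero n a (Pi.single s (1:A)) = Pi.single (castBS n a s h) 1 := by
  funext t
  simp only [pzero, LinearMap.coe_mk, AddHom.coe_mk, Pi.single_apply]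
  refine if_congr ?_ rfl rfl
  constructor
  · intro hh
    have h1 : t.1 = s.1 := Subtype.ext_iff.mp hh
    exact Subtype.ext h1
  · intro hh
    have h1 : t.1 = s.1 := Subtype.ext_iff.mp hh
    exact Subtype.ext h1

lemma pzero_single_mem (n a : ℕ) (s : BS (n+1) a) (h : n ∈ s.1) :
    pzero n a (Pi.single s (1:A)) = 0 := by
  funext t
  simp only [pzero, LinearMap.coe_mk, AddHom.coe_mk, Pi.single_apply, Pi.zero_apply]
  rw [if_neg]
  intro hh
  exact not_mem_of_BS t (congrArg Subtype.val hh ▸ h)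

lemma dmap_single : ∀ (n a c : ℕ), a + c = n → ∀ (s : BS n a) (t : BS n c),
    dmap n a c (Pi.single s 1) (Pi.single t 1) =
      if t.1 = Finset.range n \ s.1 then cf n a s else 0 := by
  intro n
  induction n with
  | zero =>
    intro a c hac s t
    obtain ⟨rfl, rfl⟩ : a = 0 ∧ c = 0 := by omega
    have ht : t.1 = ∅ := Finset.card_eq_zero.mp t.2.2
    have hs : s.1 = ∅ := Finset.card_eq_zero.mp s.2.2
    simp [dmap, dtriv, sumF, Finset.sum_pi_single', ht, hs, cf]
  | succ n ih =>
    intro a c hac s t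
    match a with
    | 0 =>
      have hc : c = n + 1 := by omega
      subst hc
      have ht : t.1 = Finset.range (n+1) :=
        Finset.eq_of_subset_of_card_le t.2.1 (by rw [t.2.2, Finset.card_range])
      have hs : s.1 = ∅ := Finset.card_eq_zero.mp s.2.2
      simp [dmap, dtriv, sumF, Finset.sum_pi_single', ht, hs, cf]
    | a+1 =>
      by_cases he : a + 1 = n + 1
      · have hc : c = 0 := by omega
        subst hc
        have ht : t.1 = ∅ := Finset.card_eq_zero.mp t.2.2
        have hs : s.1 = Finset.range (n+1) :=
          Finset.eq_of_subset_of_card_le s.2.1 (by rw [s.2.2, Finset.card_range]; omega)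
        rw [dmap, if_pos he]
        simp [dtriv, sumF, Finset.sum_pi_single', ht, hs, cf, he]
      · obtain ⟨b, rfl⟩ : ∃ b, c = b + 1 := ⟨c - 1, by omega⟩
        rw [dmap, if_neg he]
        rw [cf, if_neg he]
        simp only [LinearMap.add_apply, LinearMap.comp_apply, LinearMap.smul_apply,
          LinearMap.dualMap_apply', smul_eq_mul]
        by_cases hs : n ∈ s.1 <;> by_cases htm : n ∈ t.1
        · -- n ∈ s, n ∈ t : everything vanishes
          rw [pzero_single_mem n (b+1) t htm, pzero_single_mem n (a+1) s hs]
          rw [if_neg]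
          · simp
          · intro hcond
            have : n ∈ Finset.range (n+1) \ s.1 := hcond ▸ htm
            simp [Finset.mem_sdiff, hs] at this
        · -- n ∈ s, n ∉ t : first term survives
          rw [pminus_single_mem n a s hs, pzero_single_not_mem n (b+1) t htm,
            pzero_single_mem n (a+1) s hs]
          rw [ih a (b+1) (by omega), dif_pos hs]
          have hset : Finset.range n \ (eraseBS n a s hs).1 = Finset.range (n+1) \ s.1 := by
            ext x
            simp only [eraseBS, Finset.mem_sdiff, Finset.mem_erase, Finset.mem_range, not_and]
            constructor
            · rintro ⟨hx, hx2⟩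
              refine ⟨by omega, fun hxs => hx2 (by omega) hxs⟩
            · rintro ⟨hx, hx2⟩
              have hxn : x ≠ n := fun hh => hx2 (hh ▸ hs)
              exact ⟨by omega, fun _ hxs => hx2 hxs⟩
          have hcast : (castBS n (b+1) t htm).1 = t.1 := rfl
          rw [hcast, hset]
          simp
        · -- n ∉ s, n ∈ t : second term survives
          rw [pminus_single_not_mem n a s hs, pminus_single_mem n b t htm,
            pzero_single_not_mem n (a+1) s hs]
          rw [ih (a+1) b (by omega), dif_neg hs]
          have hiff : (eraseBS n b t htm).1 = Finset.range n \ (castBS n (a+1) s hs).1 ↔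
              t.1 = Finset.range (n+1) \ s.1 := by
            show t.1.erase n = Finset.range n \ s.1 ↔ t.1 = Finset.range (n+1) \ s.1
            constructor
            · intro hh
              ext x
              by_cases hxn : x = n
              · subst hxn
                simp [htm, Finset.mem_sdiff, Finset.mem_range, hs]
              · have hmem : x ∈ t.1 ↔ x ∈ t.1.erase n := by simp [Finset.mem_erase, hxn]
                rw [hmem, hh]
                simp only [Finset.mem_sdiff, Finset.mem_range]
                constructor
                · rintro ⟨h1, h2⟩; exact ⟨by omega, h2⟩
                · rintro ⟨h1, h2⟩; exact ⟨by omega, h2⟩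
            · intro hh
              ext x
              simp only [Finset.mem_erase, hh, Finset.mem_sdiff, Finset.mem_range]
              constructor
              · rintro ⟨hxn, hx, hxs⟩; exact ⟨by omega, hxs⟩
              · rintro ⟨hx, hxs⟩; exact ⟨by omega, by omega, hxs⟩
          rw [map_zero, LinearMap.zero_apply]
          by_cases hcond : t.1 = Finset.range (n+1) \ s.1
          · rw [if_pos (hiff.mpr hcond), if_pos hcond]
            ring
          · rw [if_neg (fun hh => hcond (hiff.mp hh)), if_neg hcond]
            ring
        · -- n ∉ s, n ∉ t : everything vanishes
          rw [pminus_single_not_mem n a s hs, pminus_single_not_mem n b t htm]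
          rw [if_neg]
          · simp
          · intro hcond
            have : n ∈ Finset.range (n+1) \ s.1 := by
              simp [Finset.mem_sdiff, hs]
            rw [← hcond] at this
            exact htm this

/-- Complementation as an equivalence `BS n a ≃ BS n (n-a)`. -/
def complEquiv (n a : ℕ) (ha : a ≤ n) : BS n a ≃ BS n (n - a) where
  toFun s := ⟨Finset.range n \ s.1, ⟨Finset.sdiff_subset, by
    rw [Finset.card_sdiff_of_subset s.2.1, Finset.card_range, s.2.2]⟩⟩
  invFun t := ⟨Finset.range n \ t.1, ⟨Finset.sdiff_subset, by
    rw [Finset.card_sdiff_of_subset t.2.1, Finset.card_range, t.2.2]; omega⟩⟩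
  left_inv s := Subtype.ext (Finset.sdiff_sdiff_eq_self s.2.1)
  right_inv t := Subtype.ext (Finset.sdiff_sdiff_eq_self t.2.1)

end S8

/-- for every `n ≥ 1` and `0 ≤ a ≤ n`, the map
`d_{a,n} : V_a^n → (V_{n-a}^n)^*` is bijective, hence an isomorphism of `𝔸`-vector
spaces (and of `U_q(sl_n)`-modules, by STATEMENT 7). -/
theorem statement8 (n : ℕ) (hn : 1 ≤ n) (a : ℕ) (ha : a ≤ n) :
    Function.Bijective (dmap n a (n-a)) := by
  have hac : a + (n - a) = n := by omega
  have key := S8.dmap_single n a (n - a) hac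
  have hinj : Function.Injective (dmap n a (n - a)) := by
    rw [← LinearMap.ker_eq_bot]
    rw [LinearMap.ker_eq_bot']
    intro f hf
    funext s
    set tc : BS n (n - a) := S8.complEquiv n a ha s with htc
    have hexp : f = ∑ s' : BS n a, f s' • (Pi.single s' 1 : V n a) := by
      conv_lhs => rw [← Finset.univ_sum_single f]
      refine Finset.sum_congr rfl fun s' _ => ?_
      rw [← Pi.single_smul, smul_eq_mul, mul_one]
    have h0 : dmap n a (n - a) f (Pi.single tc 1) = 0 := by rw [hf]; rfl
    rw [hexp] at h0
    rw [map_sum] at h0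
    rw [LinearMap.sum_apply] at h0
    have h1 : ∀ s' : BS n a,
        (dmap n a (n - a) (f s' • (Pi.single s' 1 : V n a))) (Pi.single tc 1)
          = f s' * (if tc.1 = Finset.range n \ s'.1 then S8.cf n a s' else 0) := by
      intro s'
      rw [map_smul, LinearMap.smul_apply, smul_eq_mul, key s' tc]
    rw [Finset.sum_congr rfl (fun s' _ => h1 s')] at h0
    rw [Finset.sum_eq_single s] at h0
    · have hcond : tc.1 = Finset.range n \ s.1 := rfl
      rw [if_pos hcond] at h0
      exact (mul_eq_zero.mp h0).resolve_right (S8.cf_ne_zero n a s)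
    · intro s' _ hs'
      rw [if_neg, mul_zero]
      intro hcond
      apply hs'
      apply Subtype.ext
      have : Finset.range n \ s.1 = Finset.range n \ s'.1 := hcond
      have h2 := congrArg (fun u => Finset.range n \ u) this
      simpa [Finset.sdiff_sdiff_eq_self s.2.1, Finset.sdiff_sdiff_eq_self s'.2.1] using h2.symm
    · intro h; exact absurd (Finset.mem_univ s) h
  refine ⟨hinj, ?_⟩
  have hfr : Module.finrank A (V n a) = Module.finrank A (Module.Dual A (V n (n - a))) := by
    rw [Subspace.dual_finrank_eq, Module.finrank_fintype_fun_eq_card,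
      Module.finrank_fintype_fun_eq_card]
    exact Fintype.card_congr (S8.complEquiv n a ha)
  exact (LinearMap.injective_iff_surjective_of_finrank_eq_finrank hfr).mp hinj


end
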